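/- For every integer d with 4 ≤ d ≤ 61, A_d > π^2 / (3(d+3)); equivalently, 2√(A_d) > 2π/√(3(d+3)), so the exponential main term 2√(A_d n) for q_d^{(2)}(n) dominates the exponential main term 2π√n/√(3(d+3)) for Q_d^{(2)}(n). -/

import Mathlib

open Real

lemma A_aux (d : ℕ) (α A : ℝ) (hd : 1 ≤ d)
    (hα : 0 < α ∧ α < 1 ∧ α ^ d + α = 1)
    (hA : A = (d : ℝ) / 2 * (Real.log α) ^ 2 +
      ∑' r : ℕ, α ^ ((r + 1) * d) / ((r : ℝ) + 1) ^ 2)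
    (c : ℝ) (hc0 : 0 < c) (hc1 : c < 1)
    (hcb : 1 ≤ c ^ (4 * d) + c ^ 4)
    (hnum : 3.15 ^ 2 < 3 * ((d : ℝ) + 3) *
      (8 * d * (1 - c) ^ 2 +
        ((1 - c ^ 4) + (1 - c ^ 4) ^ 2 / 4 + (1 - c ^ 4) ^ 3 / 9))) :
    π ^ 2 / (3 * ((d : ℝ) + 3)) < A := by
  obtain ⟨h0, h1, hroot⟩ := hα
  have hαd : α ^ d = 1 - α := by linarith
  have hαc : α ≤ c ^ 4 := by
    by_contra h
    push_neg at h
    have h4 : (0:ℝ) ≤ c ^ 4 := by positivity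
    have hpw : (c ^ 4) ^ d < α ^ d := pow_lt_pow_left₀ h h4 (by omega)
    rw [← pow_mul] at hpw
    nlinarith [hpw]
  set β := Real.sqrt (Real.sqrt α) with hβ
  have hβ0 : 0 < β := Real.sqrt_pos.mpr (Real.sqrt_pos.mpr h0)
  have hβ4 : β ^ 4 = α := by
    have h2 : β ^ 2 = Real.sqrt α := Real.sq_sqrt (Real.sqrt_nonneg α)
    have h3 : (Real.sqrt α) ^ 2 = α := Real.sq_sqrt h0.le
    calc β ^ 4 = (β ^ 2) ^ 2 := by ring
    _ = α := by rw [h2, h3]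
  have hβc : β ≤ c := by
    by_contra h
    push_neg at h
    have := pow_lt_pow_left₀ h hc0.le (by norm_num : (4:ℕ) ≠ 0)
    rw [hβ4] at this
    linarith
  have hlog : Real.log α = 4 * Real.log β := by
    rw [← hβ4, Real.log_pow]; push_cast; ring
  have hlogβ : Real.log β ≤ c - 1 :=
    (Real.log_le_sub_one_of_pos hβ0).trans (by linarith)
  have hlogsq : 16 * (1 - c) ^ 2 ≤ (Real.log α) ^ 2 := by
    have h5 : 4 * (1 - c) ≤ -Real.log α := by rw [hlog]; linarith
    nlinarith [h5, hc1]
  -- series bound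
  have hαd1 : α ^ d < 1 := by nlinarith
  have hαdpos : 0 < α ^ d := by positivity
  have hsum : Summable (fun r : ℕ => α ^ ((r + 1) * d) / ((r : ℝ) + 1) ^ 2) := by
    refine Summable.of_nonneg_of_le (fun r => by positivity)
      (fun r => ?_) ((summable_geometric_of_lt_one hαdpos.le hαd1).mul_left (α ^ d))
    · have h1r : (1:ℝ) ≤ ((r : ℝ) + 1) ^ 2 := by
        have : (0:ℝ) ≤ (r:ℝ) := Nat.cast_nonneg r
        nlinarith
      calc α ^ ((r + 1) * d) / ((r : ℝ) + 1) ^ 2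
          ≤ α ^ ((r + 1) * d) := div_le_self (by positivity) h1r
        _ = α ^ d * (α ^ d) ^ r := by
            rw [mul_comm (r+1) d, pow_mul, pow_succ, mul_comm]
  have hts : (1 - α) + (1 - α) ^ 2 / 4 + (1 - α) ^ 3 / 9 ≤
      ∑' r : ℕ, α ^ ((r + 1) * d) / ((r : ℝ) + 1) ^ 2 := by
    have key := Summable.sum_le_tsum (Finset.range 3) (fun i _ => by positivity) hsum
    have heq : ∑ r ∈ Finset.range 3, α ^ ((r + 1) * d) / ((r : ℝ) + 1) ^ 2
        = (1 - α) + (1 - α) ^ 2 / 4 + (1 - α) ^ 3 / 9 := by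
      rw [Finset.sum_range_succ, Finset.sum_range_succ, Finset.sum_range_succ,
        Finset.sum_range_zero]
      have e1 : α ^ ((0 + 1) * d) = 1 - α := by rw [zero_add, one_mul, hαd]
      have e2 : α ^ ((1 + 1) * d) = (1 - α) ^ 2 := by
        rw [mul_comm, pow_mul, hαd]
      have e3 : α ^ ((2 + 1) * d) = (1 - α) ^ 3 := by
        rw [mul_comm, pow_mul, hαd]
      rw [e1, e2, e3]
      norm_num
    rw [heq] at key
    exact key
  -- monotonicity in t
  have hc4lt : c ^ 4 < 1 := by
    have := pow_lt_one₀ hc0.le hc1 (by norm_num : (4:ℕ) ≠ 0)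
    exact this
  have hst : 1 - c ^ 4 ≤ 1 - α := by linarith
  have hs0 : 0 ≤ 1 - c ^ 4 := by linarith
  have hmono : (1 - c ^ 4) + (1 - c ^ 4) ^ 2 / 4 + (1 - c ^ 4) ^ 3 / 9 ≤
      (1 - α) + (1 - α) ^ 2 / 4 + (1 - α) ^ 3 / 9 := by
    gcongr
  have hAge : 8 * (d:ℝ) * (1 - c) ^ 2 +
      ((1 - c ^ 4) + (1 - c ^ 4) ^ 2 / 4 + (1 - c ^ 4) ^ 3 / 9) ≤ A := by
    rw [hA]
    have hd2 : (d:ℝ) / 2 * (16 * (1 - c) ^ 2) ≤ (d:ℝ) / 2 * (Real.log α) ^ 2 :=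
      mul_le_mul_of_nonneg_left hlogsq (by positivity)
    have hrw : (d:ℝ) / 2 * (16 * (1 - c) ^ 2) = 8 * (d:ℝ) * (1 - c) ^ 2 := by ring
    linarith [hd2, hts, hmono]
  have hden : (0:ℝ) < 3 * ((d:ℝ) + 3) := by positivity
  rw [div_lt_iff₀ hden, mul_comm]
  have hπ : π < 3.15 := pi_lt_d2
  have hπ0 : 0 < π := pi_pos
  have h1 : π ^ 2 < 3.15 ^ 2 := pow_lt_pow_left₀ hπ hπ0.le two_ne_zero
  have h2 := mul_le_mul_of_nonneg_left hAge hden.le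
  linarith

/-- For every integer d with 4 ≤ d ≤ 61, A_d > π²/(3(d+3)). -/
theorem A_d_dominates (d : ℕ) (hd4 : 4 ≤ d) (hd61 : d ≤ 61) (α A : ℝ)
    (hα : 0 < α ∧ α < 1 ∧ α ^ d + α = 1)
    (hA : A = (d : ℝ) / 2 * (Real.log α) ^ 2 +
      ∑' r : ℕ, α ^ ((r + 1) * d) / ((r : ℝ) + 1) ^ 2) :
    π ^ 2 / (3 * ((d : ℝ) + 3)) < A := by
  interval_cases d
  · exact A_aux 4 α A (by norm_num) hα hA (92260/100000) (by norm_num) (by norm_num) (by norm_num) (by norm_num)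
  · exact A_aux 5 α A (by norm_num) hα hA (93213/100000) (by norm_num) (by norm_num) (by norm_num) (by norm_num)
  · exact A_aux 6 α A (by norm_num) hα hA (93921/100000) (by norm_num) (by norm_num) (by norm_num) (by norm_num)
  · exact A_aux 7 α A (by norm_num) hα hA (94473/100000) (by norm_num) (by norm_num) (by norm_num) (by norm_num)
  · exact A_aux 8 α A (by norm_num) hα hA (94918/100000) (by norm_num) (by norm_num) (by norm_num) (by norm_num)
  · exact A_aux 9 α A (by norm_num) hα hA (95286/100000) (by norm_num) (by norm_num) (by norm_num) (by norm_num)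
  · exact A_aux 10 α A (by norm_num) hα hA (95596/100000) (by norm_num) (by norm_num) (by norm_num) (by norm_num)
  · exact A_aux 11 α A (by norm_num) hα hA (95861/100000) (by norm_num) (by norm_num) (by norm_num) (by norm_num)
  · exact A_aux 12 α A (by norm_num) hα hA (96092/100000) (by norm_num) (by norm_num) (by norm_num) (by norm_num)
  · exact A_aux 13 α A (by norm_num) hα hA (96294/100000) (by norm_num) (by norm_num) (by norm_num) (by norm_num)
  · exact A_aux 14 α A (by norm_num) hα hA (96474/100000) (by norm_num) (by norm_num) (by norm_num) (by norm_num)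
  · exact A_aux 15 α A (by norm_num) hα hA (96634/100000) (by norm_num) (by norm_num) (by norm_num) (by norm_num)
  · exact A_aux 16 α A (by norm_num) hα hA (96778/100000) (by norm_num) (by norm_num) (by norm_num) (by norm_num)
  · exact A_aux 17 α A (by norm_num) hα hA (96909/100000) (by norm_num) (by norm_num) (by norm_num) (by norm_num)
  · exact A_aux 18 α A (by norm_num) hα hA (97028/100000) (by norm_num) (by norm_num) (by norm_num) (by norm_num)
  · exact A_aux 19 α A (by norm_num) hα hA (97136/100000) (by norm_num) (by norm_num) (by norm_num) (by norm_num)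
  · exact A_aux 20 α A (by norm_num) hα hA (97236/100000) (by norm_num) (by norm_num) (by norm_num) (by norm_num)
  · exact A_aux 21 α A (by norm_num) hα hA (97329/100000) (by norm_num) (by norm_num) (by norm_num) (by norm_num)
  · exact A_aux 22 α A (by norm_num) hα hA (97414/100000) (by norm_num) (by norm_num) (by norm_num) (by norm_num)
  · exact A_aux 23 α A (by norm_num) hα hA (97493/100000) (by norm_num) (by norm_num) (by norm_num) (by norm_num)
  · exact A_aux 24 α A (by norm_num) hα hA (97567/100000) (by norm_num) (by norm_num) (by norm_num) (by norm_num)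
  · exact A_aux 25 α A (by norm_num) hα hA (97636/100000) (by norm_num) (by norm_num) (by norm_num) (by norm_num)
  · exact A_aux 26 α A (by norm_num) hα hA (97701/100000) (by norm_num) (by norm_num) (by norm_num) (by norm_num)
  · exact A_aux 27 α A (by norm_num) hα hA (97762/100000) (by norm_num) (by norm_num) (by norm_num) (by norm_num)
  · exact A_aux 28 α A (by norm_num) hα hA (97819/100000) (by norm_num) (by norm_num) (by norm_num) (by norm_num)
  · exact A_aux 29 α A (by norm_num) hα hA (97873/100000) (by norm_num) (by norm_num) (by norm_num) (by norm_num)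
  · exact A_aux 30 α A (by norm_num) hα hA (97924/100000) (by norm_num) (by norm_num) (by norm_num) (by norm_num)
  · exact A_aux 31 α A (by norm_num) hα hA (97973/100000) (by norm_num) (by norm_num) (by norm_num) (by norm_num)
  · exact A_aux 32 α A (by norm_num) hα hA (98018/100000) (by norm_num) (by norm_num) (by norm_num) (by norm_num)
  · exact A_aux 33 α A (by norm_num) hα hA (98062/100000) (by norm_num) (by norm_num) (by norm_num) (by norm_num)
  · exact A_aux 34 α A (by norm_num) hα hA (98103/100000) (by norm_num) (by norm_num) (by norm_num) (by norm_num)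
  · exact A_aux 35 α A (by norm_num) hα hA (98143/100000) (by norm_num) (by norm_num) (by norm_num) (by norm_num)
  · exact A_aux 36 α A (by norm_num) hα hA (98180/100000) (by norm_num) (by norm_num) (by norm_num) (by norm_num)
  · exact A_aux 37 α A (by norm_num) hα hA (98216/100000) (by norm_num) (by norm_num) (by norm_num) (by norm_num)
  · exact A_aux 38 α A (by norm_num) hα hA (98251/100000) (by norm_num) (by norm_num) (by norm_num) (by norm_num)
  · exact A_aux 39 α A (by norm_num) hα hA (98283/100000) (by norm_num) (by norm_num) (by norm_num) (by norm_num)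
  · exact A_aux 40 α A (by norm_num) hα hA (98315/100000) (by norm_num) (by norm_num) (by norm_num) (by norm_num)
  · exact A_aux 41 α A (by norm_num) hα hA (98345/100000) (by norm_num) (by norm_num) (by norm_num) (by norm_num)
  · exact A_aux 42 α A (by norm_num) hα hA (98374/100000) (by norm_num) (by norm_num) (by norm_num) (by norm_num)
  · exact A_aux 43 α A (by norm_num) hα hA (98402/100000) (by norm_num) (by norm_num) (by norm_num) (by norm_num)
  · exact A_aux 44 α A (by norm_num) hα hA (98429/100000) (by norm_num) (by norm_num) (by norm_num) (by norm_num)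
  · exact A_aux 45 α A (by norm_num) hα hA (98455/100000) (by norm_num) (by norm_num) (by norm_num) (by norm_num)
  · exact A_aux 46 α A (by norm_num) hα hA (98480/100000) (by norm_num) (by norm_num) (by norm_num) (by norm_num)
  · exact A_aux 47 α A (by norm_num) hα hA (98504/100000) (by norm_num) (by norm_num) (by norm_num) (by norm_num)
  · exact A_aux 48 α A (by norm_num) hα hA (98527/100000) (by norm_num) (by norm_num) (by norm_num) (by norm_num)
  · exact A_aux 49 α A (by norm_num) hα hA (98549/100000) (by norm_num) (by norm_num) (by norm_num) (by norm_num)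
  · exact A_aux 50 α A (by norm_num) hα hA (98571/100000) (by norm_num) (by norm_num) (by norm_num) (by norm_num)
  · exact A_aux 51 α A (by norm_num) hα hA (98592/100000) (by norm_num) (by norm_num) (by norm_num) (by norm_num)
  · exact A_aux 52 α A (by norm_num) hα hA (98612/100000) (by norm_num) (by norm_num) (by norm_num) (by norm_num)
  · exact A_aux 53 α A (by norm_num) hα hA (98631/100000) (by norm_num) (by norm_num) (by norm_num) (by norm_num)
  · exact A_aux 54 α A (by norm_num) hα hA (98650/100000) (by norm_num) (by norm_num) (by norm_num) (by norm_num)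
  · exact A_aux 55 α A (by norm_num) hα hA (98669/100000) (by norm_num) (by norm_num) (by norm_num) (by norm_num)
  · exact A_aux 56 α A (by norm_num) hα hA (98687/100000) (by norm_num) (by norm_num) (by norm_num) (by norm_num)
  · exact A_aux 57 α A (by norm_num) hα hA (98704/100000) (by norm_num) (by norm_num) (by norm_num) (by norm_num)
  · exact A_aux 58 α A (by norm_num) hα hA (98721/100000) (by norm_num) (by norm_num) (by norm_num) (by norm_num)
  · exact A_aux 59 α A (by norm_num) hα hA (98737/100000) (by norm_num) (by norm_num) (by norm_num) (by norm_num)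
  · exact A_aux 60 α A (by norm_num) hα hA (98753/100000) (by norm_num) (by norm_num) (by norm_num) (by norm_num)
  · exact A_aux 61 α A (by norm_num) hα hA (98768/100000) (by norm_num) (by norm_num) (by norm_num) (by norm_num)
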